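/- Let d be divisible by 8, let v ∈ {0,1}^d have Hamming weight d/8, and for w ∈ {0,1}^{d/8} let v(w) ∈ {0,1,*}^d and r_{v(w)} ∈ {0,1}^d be as in the character decomposition. Then for every U ⊆ {0,1}^d and every f : U → ℝ, Σ_{u ∈ U} χ_v(u) f(u) = Σ_{w ∈ {0,1}^{d/8}} (-1)^{⟨v, r_{v(w)}⟩₂} (Σ_{u ∈ S_{v(w)} ∩ U} f(u)). Consequently, if |Σ_{u ∈ S ∩ U} f(u)| ≤ D for every set S of the subcube set system S^d, then |Σ_{u ∈ U} χ_v(u) f(u)| ≤ 2^{d/8} · D. -/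

import Mathlib

/-- The `F₂` inner product `⟨v,u⟩₂` of `v, u ∈ {0,1}^d`, represented by the
number of coordinates where both equal `1` (so that `(-1)^{⟨v,u⟩₂}` is
`(-1)` raised to this count). -/
def inner2 {d : ℕ} (v u : Fin d → Bool) : ℕ :=
  (Finset.univ.filter (fun i => v i = true ∧ u i = true)).card

/-- The character `χ_v(u) = (-1)^{⟨v,u⟩₂}` of `F₂^d`. -/
def chi {d : ℕ} (v u : Fin d → Bool) : ℝ :=
  (-1 : ℝ) ^ inner2 v u

/-- The Hamming weight of `v ∈ {0,1}^d`. -/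
def wt {d : ℕ} (v : Fin d → Bool) : ℕ :=
  (Finset.univ.filter (fun i => v i = true)).card

/-- For `v ∈ {0,1,*}^d` (where `*` is encoded as `none`), the subcube
`S_v = {u ∈ {0,1}^d : vᵢ ≠ * → uᵢ = vᵢ}`. -/
def subcube {d : ℕ} (v : Fin d → Option Bool) : Finset (Fin d → Bool) :=
  Finset.univ.filter (fun u => ∀ i : Fin d, ∀ b : Bool, v i = some b → u i = b)

/-- The set system `S^d` of all subcubes of the boolean cube `{0,1}^d`. -/
def cubeSystem (d : ℕ) : Finset (Finset (Fin d → Bool)) :=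
  Finset.univ.image (fun v : Fin d → Option Bool => subcube v)

/-- The extension `v(w) ∈ {0,1,*}^d` of `w ∈ {0,1}^{supp(v)}`: it equals `w`
on the 1-coordinates of `v` and `*` (i.e. `none`) elsewhere. (Indexing `w` by
the set of 1-coordinates of `v` is the same as indexing by `[d/8]` via the
increasing enumeration `i₁ < i₂ < … < i_{d/8}` of that set.) -/
def extOf {d : ℕ} (v : Fin d → Bool) (w : {i : Fin d // v i = true} → Bool) :
    Fin d → Option Bool :=
  fun i => if h : v i = true then some (w ⟨i, h⟩) else none

/-- The representative `r_{v(w)} ∈ {0,1}^d` of the subcube `S_{v(w)}`,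
obtained from `v(w)` by replacing every `*` with `0`. -/
def repOf {d : ℕ} (v : Fin d → Bool) (w : {i : Fin d // v i = true} → Bool) :
    Fin d → Bool :=
  fun i => if h : v i = true then w ⟨i, h⟩ else false

/-- For `d` a positive multiple of `8` and `v ∈ {0,1}^d` of
Hamming weight `d/8`: for every `U ⊆ {0,1}^d` and `f : U → ℝ`,
`∑_{u ∈ U} χ_v(u) f(u) = ∑_{w ∈ {0,1}^{d/8}} (-1)^{⟨v, r_{v(w)}⟩₂} ∑_{u ∈ S_{v(w)} ∩ U} f(u)`;
consequently, if `|∑_{u ∈ S ∩ U} f(u)| ≤ D` for every set `S ∈ S^d`, then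
`|∑_{u ∈ U} χ_v(u) f(u)| ≤ 2^{d/8} · D`. -/
theorem chi_sum_decomposition (d : ℕ) (hd : 0 < d) (h8 : 8 ∣ d)
    (v : Fin d → Bool) (hv : wt v = d / 8)
    (U : Finset (Fin d → Bool)) (f : (Fin d → Bool) → ℝ) :
    ((∑ u ∈ U, chi v u * f u) = ∑ w : ({i : Fin d // v i = true} → Bool),
        (-1 : ℝ) ^ inner2 v (repOf v w) * ∑ u ∈ subcube (extOf v w) ∩ U, f u) ∧
    (∀ D : ℝ, (∀ S ∈ cubeSystem d, |∑ u ∈ S ∩ U, f u| ≤ D) →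
        |∑ u ∈ U, chi v u * f u| ≤ (2 : ℝ) ^ (d / 8) * D) := by
  classical
  have key : ∀ w : ({i : Fin d // v i = true} → Bool),
      (U.filter (fun u => (fun i : {i : Fin d // v i = true} => u i.1) = w))
        = subcube (extOf v w) ∩ U := by
    intro w
    ext u
    simp only [Finset.mem_inter, subcube, Finset.mem_filter]
    simp only [Finset.mem_filter, Finset.mem_inter, subcube, extOf, funext_iff,
      Finset.mem_univ, true_and]
    constructor
    · rintro ⟨hu, h⟩
      refine ⟨fun i b hb => ?_, hu⟩
      by_cases hvi : v i = true
      · simp only [dif_pos hvi, Option.some.injEq] at hb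
        rw [← hb]; exact h ⟨i, hvi⟩
      · simp [dif_neg hvi] at hb
    · rintro ⟨h, hu⟩
      refine ⟨hu, fun i => ?_⟩
      exact h i.1 (w i) (by simp [dif_pos i.2])
  have hchi : ∀ w : ({i : Fin d // v i = true} → Bool),
      ∀ u ∈ subcube (extOf v w) ∩ U, chi v u = (-1 : ℝ) ^ inner2 v (repOf v w) := by
    intro w u hu
    rw [← key w] at hu
    simp only [Finset.mem_filter, funext_iff] at hu
    unfold chi
    congr 1
    unfold inner2
    congr 1
    ext i
    simp only [Finset.mem_filter]
    simp only [Finset.mem_filter, Finset.mem_univ, true_and, repOf]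
    constructor
    · rintro ⟨h1, h2⟩
      refine ⟨h1, ?_⟩
      rw [dif_pos h1, ← hu.2 ⟨i, h1⟩]; exact h2
    · rintro ⟨h1, h2⟩
      rw [dif_pos h1] at h2
      exact ⟨h1, by rw [hu.2 ⟨i, h1⟩]; exact h2⟩
  have h1 : (∑ u ∈ U, chi v u * f u) = ∑ w : ({i : Fin d // v i = true} → Bool),
      (-1 : ℝ) ^ inner2 v (repOf v w) * ∑ u ∈ subcube (extOf v w) ∩ U, f u := by
    rw [← Finset.sum_fiberwise U (fun u => (fun i : {i : Fin d // v i = true} => u i.1))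
      (fun u => chi v u * f u)]
    refine Finset.sum_congr rfl fun w _ => ?_
    rw [key w, Finset.mul_sum]
    exact Finset.sum_congr rfl fun u hu => by rw [hchi w u hu]
  refine ⟨h1, fun D hD => ?_⟩
  have hcard : Fintype.card ({i : Fin d // v i = true} → Bool) = 2 ^ (d / 8) := by
    rw [Fintype.card_fun, Fintype.card_bool, Fintype.card_subtype, ← hv, wt]
  calc |∑ u ∈ U, chi v u * f u|
      ≤ ∑ w : ({i : Fin d // v i = true} → Bool),
          |(-1 : ℝ) ^ inner2 v (repOf v w) * ∑ u ∈ subcube (extOf v w) ∩ U, f u| := by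
        rw [h1]; exact Finset.abs_sum_le_sum_abs _ _
    _ ≤ ∑ _w : ({i : Fin d // v i = true} → Bool), D := by
        refine Finset.sum_le_sum fun w _ => ?_
        rw [abs_mul, abs_pow, abs_neg, abs_one, one_pow, one_mul]
        exact hD _ (Finset.mem_image.2 ⟨extOf v w, Finset.mem_univ _, rfl⟩)
    _ = (2 : ℝ) ^ (d / 8) * D := by
        rw [Finset.sum_const, Finset.card_univ, hcard, nsmul_eq_mul]
        push_cast
        ring
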